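/- arXiv:1804.11223 — 2 statements merged into one kernel-verified Lean document; each statement's English description precedes it below -/
import Mathlib

section
/- For X a finite-dimensional Hilbert space and a connected undirected graph (V,E), there exists a constant C₁ > 0 such that for every v ∈ D^⊥ and every E' ⊆ E that connects V, one can find vectors z_{(i,j)} ∈ H_{(i,j)}^⊥ for each (i,j) ∈ E' with Σ_{(i,j)∈E'} z_{(i,j)} = v and ‖z_{(i,j)}‖ ≤ C₁‖v‖ for all (i,j) ∈ E'. -/
open scoped Classical

/-- The subspace `H_(i,j) = {x : x i = x j}` of the product Hilbert space. -/
def Hsub (X : Type*) [NormedAddCommGroup X] [InnerProductSpace ℝ X] (n : ℕ) (i j : Fin n) :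
    Submodule ℝ (PiLp 2 fun _ : Fin n => X) where
  carrier := {x | x i = x j}
  add_mem' := by
    intro a b ha hb
    simp only [Set.mem_setOf_eq] at *
    simp [PiLp.add_apply, ha, hb]
  zero_mem' := by simp
  smul_mem' := by
    intro c a ha
    simp only [Set.mem_setOf_eq] at *
    simp [PiLp.smul_apply, ha]

/-- `Hsub` as a function on unordered pairs (edges). -/
def HsubSym (X : Type*) [NormedAddCommGroup X] [InnerProductSpace ℝ X] (n : ℕ) :
    Sym2 (Fin n) → Submodule ℝ (PiLp 2 fun _ : Fin n => X) :=
  Sym2.lift ⟨fun i j => Hsub X n i j, by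
    intro i j
    apply SetLike.ext
    intro x
    exact eq_comm⟩

/-- The diagonal subspace `D`. -/
def Dsub (X : Type*) [NormedAddCommGroup X] [InnerProductSpace ℝ X] (n : ℕ) :
    Submodule ℝ (PiLp 2 fun _ : Fin n => X) where
  carrier := {x | ∀ i j, x i = x j}
  add_mem' := by
    intro a b ha hb i j
    simp [PiLp.add_apply, ha i j, hb i j]
  zero_mem' := by simp
  smul_mem' := by
    intro c a ha i j
    simp [PiLp.smul_apply, ha i j]


section Aux
variable {X : Type*} [NormedAddCommGroup X] [InnerProductSpace ℝ X] {n : ℕ}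

lemma HsubSym_mk (i j : Fin n) : HsubSym X n s(i, j) = Hsub X n i j := rfl

lemma mem_Hsub {i j : Fin n} {x : PiLp 2 fun _ : Fin n => X} :
    x ∈ Hsub X n i j ↔ x i = x j := Iff.rfl

lemma Dsub_le_HsubSym (e : Sym2 (Fin n)) : Dsub X n ≤ HsubSym X n e := by
  induction e using Sym2.ind with
  | _ i j =>
    intro x hx
    rw [HsubSym_mk, mem_Hsub]
    exact hx i j

lemma walk_eq {G' : SimpleGraph (Fin n)} {x : PiLp 2 fun _ : Fin n => X}
    (hx : ∀ e ∈ G'.edgeFinset, x ∈ HsubSym X n e) {i j : Fin n} (w : G'.Walk i j) :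
    x i = x j := by
  induction w with
  | nil => rfl
  | cons h p ih =>
    rename_i a b c
    have he : s(a, b) ∈ G'.edgeFinset := by
      rw [SimpleGraph.mem_edgeFinset]
      exact h
    have := hx _ he
    rw [HsubSym_mk, mem_Hsub] at this
    exact this.trans ih

variable [FiniteDimensional ℝ X]

lemma sup_orth_eq {G' : SimpleGraph (Fin n)} (hc : G'.Connected) :
    (Dsub X n)ᗮ ≤ ⨆ e : G'.edgeFinset, (HsubSym X n (e : Sym2 (Fin n)))ᗮ := by
  set K : Submodule ℝ (PiLp 2 fun _ : Fin n => X) :=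
    ⨆ e : G'.edgeFinset, (HsubSym X n (e : Sym2 (Fin n)))ᗮ with hK
  have hKorth : Kᗮ = Dsub X n := by
    rw [hK, ← Submodule.iInf_orthogonal]
    apply le_antisymm
    · intro x hx
      simp only [Submodule.mem_iInf] at hx
      intro i j
      have hx' : ∀ e ∈ G'.edgeFinset, x ∈ HsubSym X n e := by
        intro e he
        have := hx ⟨e, he⟩
        rwa [Submodule.orthogonal_orthogonal] at this
      exact walk_eq hx' ((hc.preconnected i j).some)
    · intro x hx
      simp only [Submodule.mem_iInf]
      intro e
      rw [Submodule.orthogonal_orthogonal]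
      exact Dsub_le_HsubSym _ hx
  rw [← hKorth]
  exact le_of_eq (Submodule.orthogonal_orthogonal K)

set_option maxHeartbeats 1000000 in
lemma key_lemma {G' : SimpleGraph (Fin n)} (hc : G'.Connected) :
    ∃ C : ℝ, 0 < C ∧ ∀ v ∈ (Dsub X n)ᗮ,
      ∃ z : Sym2 (Fin n) → PiLp 2 (fun _ : Fin n => X),
        (∀ e ∈ G'.edgeFinset, z e ∈ (HsubSym X n e)ᗮ) ∧
        (∑ e ∈ G'.edgeFinset, z e) = v ∧
        ∀ e ∈ G'.edgeFinset, ‖z e‖ ≤ C * ‖v‖ := by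
  set E := PiLp 2 fun _ : Fin n => X
  set F := G'.edgeFinset with hF
  set W : Sym2 (Fin n) → Submodule ℝ E :=
    fun e => if e ∈ F then (HsubSym X n e)ᗮ else ⊥ with hWdef
  have hW_le : ∀ e, W e ≤ (Dsub X n)ᗮ := by
    intro e
    rw [hWdef]
    dsimp only
    split
    · exact Submodule.orthogonal_le (Dsub_le_HsubSym e)
    · exact bot_le
  have hsup : (Dsub X n)ᗮ ≤ ⨆ e, W e := by
    refine le_trans (sup_orth_eq hc) (iSup_le fun e => ?_)
    refine le_iSup_of_le (e : Sym2 (Fin n)) ?_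
    rw [hWdef]
    dsimp only
    rw [if_pos e.2]
  set P : Submodule ℝ (Sym2 (Fin n) → E) := Submodule.pi Set.univ W with hP
  have hTmem : ∀ z : P, (∑ e, (z : Sym2 (Fin n) → E) e) ∈ (Dsub X n)ᗮ := fun z =>
    Submodule.sum_mem _ fun e _ => hW_le e (z.2 e trivial)
  set T : P →ₗ[ℝ] ↥(Dsub X n)ᗮ :=
    { toFun := fun z => ⟨∑ e, (z : Sym2 (Fin n) → E) e, hTmem z⟩
      map_add' := by
        intro a b
        apply Subtype.ext
        simp [Finset.sum_add_distrib]
      map_smul' := by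
        intro c a
        apply Subtype.ext
        simp [Finset.smul_sum] } with hT
  have hTsurj : Function.Surjective T := by
    rintro ⟨v, hv⟩
    obtain ⟨f, hf, hsum⟩ := (Submodule.mem_iSup_iff_exists_finsupp W v).1 (hsup hv)
    refine ⟨⟨(f : Sym2 (Fin n) → E), fun e _ => hf e⟩, Subtype.ext ?_⟩
    show (∑ e, f e) = v
    rw [← hsum, Finsupp.sum_fintype]
    intro; rfl
  obtain ⟨S, hS⟩ := T.exists_rightInverse_of_surjective (LinearMap.range_eq_top.2 hTsurj)
  let Sc := LinearMap.toContinuousLinearMap S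
  refine ⟨‖Sc‖ + 1, by positivity, ?_⟩
  intro v hv
  set w := S ⟨v, hv⟩ with hw
  have hTw : T w = ⟨v, hv⟩ := by
    rw [hw, ← LinearMap.comp_apply, hS, LinearMap.id_apply]
  refine ⟨fun e => (w : Sym2 (Fin n) → E) e, ?_, ?_, ?_⟩
  · intro e he
    have h : (w : Sym2 (Fin n) → E) e ∈ W e := w.2 e trivial
    have hWe : W e = (HsubSym X n e)ᗮ := if_pos he
    rwa [hWe] at h
  · have hz : ∀ e ∈ Finset.univ, e ∉ F → (w : Sym2 (Fin n) → E) e = 0 := by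
      intro e _ he
      have h : (w : Sym2 (Fin n) → E) e ∈ W e := w.2 e trivial
      have hWe : W e = ⊥ := if_neg he
      rw [hWe] at h
      exact (Submodule.mem_bot ℝ).1 h
    rw [Finset.sum_subset (Finset.subset_univ F) hz]
    exact congrArg Subtype.val hTw
  · intro e he
    have h1 : ‖(w : Sym2 (Fin n) → E) e‖ ≤ ‖w‖ := norm_le_pi_norm _ e
    have hScS : Sc ⟨v, hv⟩ = w := by rw [hw]; rfl
    have h2 : ‖w‖ ≤ ‖Sc‖ * ‖v‖ := by
      have h := Sc.le_opNorm ⟨v, hv⟩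
      rw [hScS] at h
      exact h
    have h3 : ‖Sc‖ * ‖v‖ ≤ (‖Sc‖ + 1) * ‖v‖ := by
      have := norm_nonneg v
      nlinarith
    linarith

end Aux

theorem stmt2 {X : Type*} [NormedAddCommGroup X] [InnerProductSpace ℝ X]
    [FiniteDimensional ℝ X] {n : ℕ} (hn : 1 ≤ n)
    (G : SimpleGraph (Fin n)) (hG : G.Connected) :
    ∃ C₁ : ℝ, 0 < C₁ ∧
      ∀ G' : SimpleGraph (Fin n), G' ≤ G → G'.Connected →
        ∀ v ∈ (Dsub X n)ᗮ,
          ∃ z : Sym2 (Fin n) → PiLp 2 (fun _ : Fin n => X),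
            (∀ e ∈ G'.edgeFinset, z e ∈ (HsubSym X n e)ᗮ) ∧
            (∑ e ∈ G'.edgeFinset, z e) = v ∧
            ∀ e ∈ G'.edgeFinset, ‖z e‖ ≤ C₁ * ‖v‖ := by
  have key : ∀ G' : SimpleGraph (Fin n), ∃ C : ℝ, 0 < C ∧ (G'.Connected →
      ∀ v ∈ (Dsub X n)ᗮ,
        ∃ z : Sym2 (Fin n) → PiLp 2 (fun _ : Fin n => X),
          (∀ e ∈ G'.edgeFinset, z e ∈ (HsubSym X n e)ᗮ) ∧
          (∑ e ∈ G'.edgeFinset, z e) = v ∧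
          ∀ e ∈ G'.edgeFinset, ‖z e‖ ≤ C * ‖v‖) := by
    intro G'
    by_cases hc : G'.Connected
    · obtain ⟨C, hC, h⟩ := key_lemma (X := X) hc
      exact ⟨C, hC, fun _ => h⟩
    · exact ⟨1, one_pos, fun h => absurd h hc⟩
  choose C hCpos hC using key
  refine ⟨Finset.univ.sup' ⟨⊥, Finset.mem_univ _⟩ C,
    lt_of_lt_of_le (hCpos ⊥) (Finset.le_sup' C (Finset.mem_univ ⊥)), ?_⟩
  intro G' _ hc v hv
  obtain ⟨z, h1, h2, h3⟩ := hC G' hc v hv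
  refine ⟨z, h1, h2, fun e he => le_trans (h3 e he) ?_⟩
  exact mul_le_mul_of_nonneg_right (Finset.le_sup' C (Finset.mem_univ G')) (norm_nonneg v)
end

section
/- Let H be a finite-dimensional Hilbert space, x₀ ∈ H, and for a finite index set A let h_α : H → ℝ∪{∞} be proper closed convex functions, α ∈ A. Fix S ⊆ A nonempty and vectors z_α ∈ H for α ∉ S. If ({z_α*}_{α∈S}) minimizes ({z_α}_{α∈S}) ↦ ½‖x₀ − Σ_{α∉S} z_α − Σ_{α∈S} z_α‖² + Σ_{α∈S} h_α*(z_α), then x* := x₀ − Σ_{α∉S} z_α − Σ_{α∈S} z_α* minimizes x ↦ Σ_{α∈S} h_α(x) + ½‖x − (x₀ − Σ_{α∉S} z_α)‖². Conversely, if x* minimizes the latter and there exist z̃_α ∈ ∂h_α(x*) for α ∈ S with x* − x₀ + Σ_{α∉S} z_α + Σ_{α∈S} z̃_α = 0, then ({z̃_α}_{α∈S}) minimizes the former. -/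
/-- Fenchel conjugate of an extended-real-valued function on a real inner product space. -/
noncomputable def fconj {H : Type*} [NormedAddCommGroup H] [InnerProductSpace ℝ H]
    (h : H → EReal) (z : H) : EReal :=
  ⨆ x : H, ((inner ℝ z x : ℝ) : EReal) - h x

/-- `v` is a subgradient of `h` at `x`. -/
def InSubdiff {H : Type*} [NormedAddCommGroup H] [InnerProductSpace ℝ H]
    (h : H → EReal) (x v : H) : Prop :=
  ∀ y : H, h x + ((inner ℝ v (y - x) : ℝ) : EReal) ≤ h y

open scoped RealInnerProductSpace

namespace Aux15

set_option linter.unusedSectionVars false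

variable {H : Type*} [NormedAddCommGroup H] [InnerProductSpace ℝ H]

lemma le_fconj (g : H → EReal) (z x : H) :
    ((inner ℝ z x : ℝ) : EReal) - g x ≤ fconj g z :=
  le_iSup (fun x => ((inner ℝ z x : ℝ) : EReal) - g x) x

lemma fconj_ne_bot (g : H → EReal) {xb : H} (hxbt : g xb ≠ ⊤) (hxbb : g xb ≠ ⊥) (z : H) :
    fconj g z ≠ ⊥ := by
  have h1 := le_fconj g z xb
  rw [← EReal.coe_toReal hxbt hxbb, ← EReal.coe_sub] at h1
  exact ((EReal.bot_lt_coe _).trans_le h1).ne'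

lemma sub_le_real {a c : ℝ} {b : EReal} (hb : b ≠ ⊥) (h : (a : EReal) - b ≤ (c : EReal)) :
    ((a - c : ℝ) : EReal) ≤ b := by
  induction b with
  | bot => exact absurd rfl hb
  | coe m =>
      rw [← EReal.coe_sub, EReal.coe_le_coe_iff] at h
      exact EReal.coe_le_coe_iff.2 (by linarith)
  | top => exact le_top

lemma sum_coe {A : Type*} (S : Finset A) (c : A → ℝ) :
    ∑ α ∈ S, ((c α : ℝ) : EReal) = ((∑ α ∈ S, c α : ℝ) : EReal) :=
  (map_sum (⟨⟨Real.toEReal, EReal.coe_zero⟩, EReal.coe_add⟩ : ℝ →+ EReal) c S).symm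

lemma sum_ne_bot {A : Type*} {S : Finset A} {f : A → EReal} (h : ∀ α ∈ S, f α ≠ ⊥) :
    ∑ α ∈ S, f α ≠ ⊥ := by
  classical
  induction S using Finset.cons_induction with
  | empty => simp
  | cons a s ha ih =>
      rw [Finset.sum_cons]
      have h1 := h a (Finset.mem_cons_self a s)
      have h2 := ih fun α hα => h α (Finset.mem_cons_of_mem hα)
      simp [EReal.add_eq_bot_iff, h1, h2]

lemma sum_eq_top {A : Type*} {S : Finset A} {f : A → EReal} (β : A) (hβ : β ∈ S)
    (ht : f β = ⊤) (h : ∀ α ∈ S, f α ≠ ⊥) : ∑ α ∈ S, f α = ⊤ := by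
  classical
  rw [← Finset.add_sum_erase _ _ hβ, ht]
  exact EReal.top_add_of_ne_bot (sum_ne_bot fun α hα => h α (Finset.mem_of_mem_erase hα))

lemma fconj_combo (g : H → EReal) (hbot : ∀ x, g x ≠ ⊥) {z₁ z₂ : H} {c₁ c₂ t : ℝ}
    (ht0 : 0 ≤ t) (ht1 : t ≤ 1) (h₁ : fconj g z₁ ≤ (c₁ : EReal)) (h₂ : fconj g z₂ ≤ (c₂ : EReal)) :
    fconj g ((1 - t) • z₁ + t • z₂) ≤ (((1 - t) * c₁ + t * c₂ : ℝ) : EReal) := by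
  refine iSup_le fun x => ?_
  rcases eq_or_ne (g x) ⊤ with hx | hx
  · rw [hx, EReal.sub_top]; exact bot_le
  · have hm : g x = ((g x).toReal : EReal) := (EReal.coe_toReal hx (hbot x)).symm
    set m := (g x).toReal
    have e₁ : (inner ℝ z₁ x : ℝ) - m ≤ c₁ := by
      have h3 := (le_fconj g z₁ x).trans h₁
      rw [hm, ← EReal.coe_sub, EReal.coe_le_coe_iff] at h3
      exact h3
    have e₂ : (inner ℝ z₂ x : ℝ) - m ≤ c₂ := by
      have h3 := (le_fconj g z₂ x).trans h₂
      rw [hm, ← EReal.coe_sub, EReal.coe_le_coe_iff] at h3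
      exact h3
    have hi : (inner ℝ ((1 - t) • z₁ + t • z₂) x : ℝ)
        = (1 - t) * (inner ℝ z₁ x : ℝ) + t * (inner ℝ z₂ x : ℝ) := by
      simp [inner_add_left, real_inner_smul_left]
    rw [hm, ← EReal.coe_sub, EReal.coe_le_coe_iff, hi]
    nlinarith

variable [FiniteDimensional ℝ H]

lemma sep (g : H → EReal) (hbot : ∀ x, g x ≠ ⊥) {xb : H} (hxbt : g xb ≠ ⊤)
    (hlsc : LowerSemicontinuous g)
    (hconv : ∀ x y : H, ∀ a b : ℝ, 0 ≤ a → 0 ≤ b → a + b = 1 →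
      g (a • x + b • y) ≤ (a : EReal) * g x + (b : EReal) * g y)
    (x : H) (tt : ℝ) (hxt : (tt : EReal) < g x) :
    ∃ (v : H) (s c : ℝ), 0 ≤ s ∧ (inner ℝ v x : ℝ) + s * tt < c ∧
      ∀ y : H, ∀ r : ℝ, g y ≤ (r : EReal) → c < (inner ℝ v y : ℝ) + s * r := by
  set E : Set (H × ℝ) := {p | g p.1 ≤ (p.2 : EReal)} with hE
  have hEc : IsClosed E := by
    have h1 : IsClosed {p : H × EReal | g p.1 ≤ p.2} := hlsc.isClosed_epigraph
    have h2 : E = (fun p : H × ℝ => ((p.1, (p.2 : EReal)) : H × EReal)) ⁻¹'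
        {p : H × EReal | g p.1 ≤ p.2} := rfl
    rw [h2]
    exact h1.preimage (continuous_fst.prodMk (continuous_coe_real_ereal.comp continuous_snd))
  have hEconv : Convex ℝ E := by
    rintro p hp q hq a b ha hb hab
    simp only [hE, Set.mem_setOf_eq] at hp hq ⊢
    have h1 : g p.1 ≠ ⊤ := (hp.trans_lt (EReal.coe_lt_top p.2)).ne
    have h2 : g q.1 ≠ ⊤ := (hq.trans_lt (EReal.coe_lt_top q.2)).ne
    have hm₁ : g p.1 = ((g p.1).toReal : EReal) := (EReal.coe_toReal h1 (hbot p.1)).symm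
    have hm₂ : g q.1 = ((g q.1).toReal : EReal) := (EReal.coe_toReal h2 (hbot q.1)).symm
    have hp' : (g p.1).toReal ≤ p.2 := by rw [hm₁, EReal.coe_le_coe_iff] at hp; exact hp
    have hq' : (g q.1).toReal ≤ q.2 := by rw [hm₂, EReal.coe_le_coe_iff] at hq; exact hq
    have h3 := hconv p.1 q.1 a b ha hb hab
    rw [hm₁, hm₂, ← EReal.coe_mul, ← EReal.coe_mul, ← EReal.coe_add] at h3
    have h4 : (a • p + b • q).1 = a • p.1 + b • q.1 := rfl
    have h5 : (a • p + b • q).2 = a * p.2 + b * q.2 := rfl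
    rw [h4, h5]
    refine h3.trans (EReal.coe_le_coe_iff.2 ?_)
    nlinarith
  have hxE : (x, tt) ∉ E := fun hmem => (not_le.2 hxt) hmem
  obtain ⟨f, c, hfx, hfE⟩ := geometric_hahn_banach_point_closed hEconv hEc hxE
  set v : H := (InnerProductSpace.toDual ℝ H).symm (f.comp (ContinuousLinearMap.inl ℝ H ℝ)) with hv
  set s : ℝ := f (0, 1) with hs
  have hf : ∀ p : H × ℝ, f p = (inner ℝ v p.1 : ℝ) + s * p.2 := by
    intro p
    have h1 : (inner ℝ v p.1 : ℝ) = f (p.1, 0) := by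
      rw [hv, InnerProductSpace.toDual_symm_apply]; rfl
    have h2 : f (0, p.2) = s * p.2 := by
      have h3 : ((0 : H), p.2) = p.2 • ((0 : H), (1 : ℝ)) := by simp
      rw [h3, f.map_smul]; simp [hs, mul_comm]
    have h3 : p = (p.1, 0) + (0, p.2) := by simp
    calc f p = f ((p.1, 0) + (0, p.2)) := by rw [← h3]
    _ = f (p.1, 0) + f (0, p.2) := f.map_add _ _
    _ = (inner ℝ v p.1 : ℝ) + s * p.2 := by rw [← h1, h2]
  have hmemE : ∀ y : H, ∀ r : ℝ, g y ≤ (r : EReal) → c < (inner ℝ v y : ℝ) + s * r := by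
    intro y r hyr
    have := hfE (y, r) hyr
    rwa [hf] at this
  have hsnn : 0 ≤ s := by
    by_contra hneg
    push_neg at hneg
    have hmb : g xb = ((g xb).toReal : EReal) := (EReal.coe_toReal hxbt (hbot xb)).symm
    set mb := (g xb).toReal
    set r : ℝ := max mb ((c - (inner ℝ v xb : ℝ)) / s) with hr
    have h1 : g xb ≤ (r : EReal) := by
      rw [hmb]; exact EReal.coe_le_coe_iff.2 (le_max_left _ _)
    have h2 := hmemE xb r h1
    have h3 : (c - (inner ℝ v xb : ℝ)) / s ≤ r := le_max_right _ _
    have h4 : s * r ≤ c - (inner ℝ v xb : ℝ) := by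
      rw [div_le_iff_of_neg hneg] at h3
      linarith
    linarith
  refine ⟨v, s, c, hsnn, ?_, hmemE⟩
  have := hfx
  rwa [hf] at this

lemma fconj_bound_of_sep (g : H → EReal) (hbot : ∀ x, g x ≠ ⊥) {v : H} {s c : ℝ} (hs : 0 < s)
    (hgt : ∀ y : H, ∀ r : ℝ, g y ≤ (r : EReal) → c < (inner ℝ v y : ℝ) + s * r) :
    fconj g ((-(s⁻¹)) • v) ≤ ((-(c / s) : ℝ) : EReal) := by
  refine iSup_le fun y => ?_
  rcases eq_or_ne (g y) ⊤ with hy | hy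
  · rw [hy, EReal.sub_top]; exact bot_le
  · have hm : g y = ((g y).toReal : EReal) := (EReal.coe_toReal hy (hbot y)).symm
    set m := (g y).toReal
    have h1 := hgt y m (le_of_eq hm)
    rw [hm, ← EReal.coe_sub, EReal.coe_le_coe_iff]
    have h2 : (inner ℝ ((-(s⁻¹)) • v) y : ℝ) = -(s⁻¹) * (inner ℝ v y : ℝ) := real_inner_smul_left _ _ _
    rw [h2, div_eq_mul_inv]
    have h3 : s * s⁻¹ = 1 := mul_inv_cancel₀ hs.ne'
    have h4 : 0 < s⁻¹ := inv_pos.2 hs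
    have h5 : c * s⁻¹ ≤ (inner ℝ v y : ℝ) * s⁻¹ + m := by
      calc c * s⁻¹ ≤ ((inner ℝ v y : ℝ) + s * m) * s⁻¹ :=
            mul_le_mul_of_nonneg_right h1.le h4.le
      _ = (inner ℝ v y : ℝ) * s⁻¹ + m * (s * s⁻¹) := by ring
      _ = (inner ℝ v y : ℝ) * s⁻¹ + m := by rw [h3, mul_one]
    linarith

lemma exists_minorant (g : H → EReal) (hbot : ∀ x, g x ≠ ⊥) {xb : H} (hxbt : g xb ≠ ⊤)
    (hlsc : LowerSemicontinuous g)
    (hconv : ∀ x y : H, ∀ a b : ℝ, 0 ≤ a → 0 ≤ b → a + b = 1 →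
      g (a • x + b • y) ≤ (a : EReal) * g x + (b : EReal) * g y) :
    ∃ (z₀ : H) (c₀ : ℝ), fconj g z₀ ≤ (c₀ : EReal) := by
  have hmb : g xb = ((g xb).toReal : EReal) := (EReal.coe_toReal hxbt (hbot xb)).symm
  set mb := (g xb).toReal
  have hlt : ((mb - 1 : ℝ) : EReal) < g xb := by
    rw [hmb]; exact EReal.coe_lt_coe_iff.2 (by linarith)
  obtain ⟨v, s, c, hs0, h1, h2⟩ := sep g hbot hxbt hlsc hconv xb (mb - 1) hlt
  have h3 := h2 xb mb (le_of_eq hmb)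
  have hs : 0 < s := by
    rcases hs0.lt_or_eq with hcase | hcase
    · exact hcase
    · exfalso; rw [← hcase, zero_mul, add_zero] at h1 h3; linarith
  exact ⟨(-(s⁻¹)) • v, -(c / s), fconj_bound_of_sep g hbot hs h2⟩

lemma fm_bound (g : H → EReal) (hbot : ∀ x, g x ≠ ⊥) {xb : H} (hxbt : g xb ≠ ⊤)
    (hlsc : LowerSemicontinuous g)
    (hconv : ∀ x y : H, ∀ a b : ℝ, 0 ≤ a → 0 ≤ b → a + b = 1 →
      g (a • x + b • y) ≤ (a : EReal) * g x + (b : EReal) * g y)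
    (x : H) (M : ℝ)
    (hub : ∀ u : H, ((inner ℝ x u : ℝ) : EReal) - fconj g u ≤ (M : EReal)) :
    g x ≤ (M : EReal) := by
  by_contra hgt
  push_neg at hgt
  obtain ⟨v, s, c, hs0, h1, h2⟩ := sep g hbot hxbt hlsc hconv x M hgt
  have hfnb : ∀ zz : H, fconj g zz ≠ ⊥ := fun zz => fconj_ne_bot g hxbt (hbot xb) zz
  rcases hs0.lt_or_eq with hs | hs
  · -- s > 0
    set zz : H := (-(s⁻¹)) • v with hzz
    have h3 : fconj g zz ≤ ((-(c / s) : ℝ) : EReal) := fconj_bound_of_sep g hbot hs h2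
    have h4 : fconj g zz = ((fconj g zz).toReal : EReal) :=
      (EReal.coe_toReal (h3.trans_lt (EReal.coe_lt_top _)).ne (hfnb zz)).symm
    set d := (fconj g zz).toReal
    have h5 : d ≤ -(c / s) := by rw [h4, EReal.coe_le_coe_iff] at h3; exact h3
    have h6 := hub zz
    rw [h4, ← EReal.coe_sub, EReal.coe_le_coe_iff] at h6
    have h7 : (inner ℝ x zz : ℝ) = -(s⁻¹) * (inner ℝ v x : ℝ) := by
      rw [hzz, real_inner_comm]; exact real_inner_smul_left _ _ _
    have h8 : s * s⁻¹ = 1 := mul_inv_cancel₀ hs.ne'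
    have h9 : 0 < s⁻¹ := inv_pos.2 hs
    rw [div_eq_mul_inv] at h5
    have h10 : (inner ℝ v x : ℝ) * s⁻¹ + M < c * s⁻¹ := by
      calc (inner ℝ v x : ℝ) * s⁻¹ + M = ((inner ℝ v x : ℝ) + s * M) * s⁻¹ := by
            rw [add_mul]; congr 1; rw [mul_comm s M, mul_assoc, h8, mul_one]
      _ < c * s⁻¹ := mul_lt_mul_of_pos_right h1 h9
    linarith
  · -- s = 0
    rw [← hs] at h1 h2
    simp only [zero_mul, add_zero] at h1 h2
    obtain ⟨z₀, c₀, hz₀⟩ := exists_minorant g hbot hxbt hlsc hconv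
    have h4 : fconj g z₀ = ((fconj g z₀).toReal : EReal) :=
      (EReal.coe_toReal (hz₀.trans_lt (EReal.coe_lt_top _)).ne (hfnb z₀)).symm
    set m₀ := (fconj g z₀).toReal
    have hcx : 0 < c - (inner ℝ v x : ℝ) := by linarith
    set lam : ℝ := max 0 ((M - ((inner ℝ x z₀ : ℝ) - m₀) + 1) / (c - (inner ℝ v x : ℝ))) with hlam
    have hlam0 : 0 ≤ lam := le_max_left _ _
    set zl : H := z₀ - lam • v with hzl
    have hfzl : fconj g zl ≤ ((m₀ - lam * c : ℝ) : EReal) := by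
      refine iSup_le fun y => ?_
      rcases eq_or_ne (g y) ⊤ with hy | hy
      · rw [hy, EReal.sub_top]; exact bot_le
      · have hm : g y = ((g y).toReal : EReal) := (EReal.coe_toReal hy (hbot y)).symm
        set m := (g y).toReal
        have ha := h2 y m (le_of_eq hm)
        have hb : (inner ℝ z₀ y : ℝ) - m ≤ m₀ := by
          have h5 := le_fconj g z₀ y
          rw [hm, ← EReal.coe_sub, h4, EReal.coe_le_coe_iff] at h5
          exact h5
        rw [hm, ← EReal.coe_sub, EReal.coe_le_coe_iff]
        have hc : (inner ℝ zl y : ℝ) = (inner ℝ z₀ y : ℝ) - lam * (inner ℝ v y : ℝ) := by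
          rw [hzl, inner_sub_left, real_inner_smul_left]
        rw [hc]
        nlinarith [mul_le_mul_of_nonneg_left ha.le hlam0]
    have h5 : fconj g zl = ((fconj g zl).toReal : EReal) :=
      (EReal.coe_toReal (hfzl.trans_lt (EReal.coe_lt_top _)).ne (hfnb zl)).symm
    set dl := (fconj g zl).toReal
    have h6 : dl ≤ m₀ - lam * c := by rw [h5, EReal.coe_le_coe_iff] at hfzl; exact hfzl
    have h7 := hub zl
    rw [h5, ← EReal.coe_sub, EReal.coe_le_coe_iff] at h7
    have h8 : (inner ℝ x zl : ℝ) = (inner ℝ x z₀ : ℝ) - lam * (inner ℝ v x : ℝ) := by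
      rw [hzl, inner_sub_right, real_inner_smul_right, real_inner_comm x v]
    have h9 : (M - ((inner ℝ x z₀ : ℝ) - m₀) + 1) / (c - (inner ℝ v x : ℝ)) ≤ lam := le_max_right _ _
    rw [div_le_iff₀ hcx] at h9
    nlinarith

end Aux15

theorem stmt15 {H : Type*} [NormedAddCommGroup H] [InnerProductSpace ℝ H]
    [FiniteDimensional ℝ H] {A : Type*} [Fintype A] [DecidableEq A]
    (h : A → H → EReal)
    (hproper : ∀ α, (∀ x, h α x ≠ ⊥) ∧ ∃ x, h α x ≠ ⊤)
    (hlsc : ∀ α, LowerSemicontinuous (h α))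
    (hconv : ∀ α, ∀ x y : H, ∀ a b : ℝ, 0 ≤ a → 0 ≤ b → a + b = 1 →
      h α (a • x + b • y) ≤ (a : EReal) * h α x + (b : EReal) * h α y)
    (x₀ : H) (S : Finset A) (hS : S.Nonempty) (z : A → H) :
    -- forward direction: dual block minimizer gives primal minimizer
    (∀ zstar : A → H,
      (∀ w : A → H,
        (((1:ℝ)/2 * ‖x₀ - ∑ α ∈ Sᶜ, z α - ∑ α ∈ S, zstar α‖ ^ 2 : ℝ) : EReal)
            + ∑ α ∈ S, fconj (h α) (zstar α)
          ≤ (((1:ℝ)/2 * ‖x₀ - ∑ α ∈ Sᶜ, z α - ∑ α ∈ S, w α‖ ^ 2 : ℝ) : EReal)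
            + ∑ α ∈ S, fconj (h α) (w α)) →
      (∀ x : H,
        (∑ α ∈ S, h α (x₀ - ∑ α ∈ Sᶜ, z α - ∑ α ∈ S, zstar α))
            + (((1:ℝ)/2 * ‖(x₀ - ∑ α ∈ Sᶜ, z α - ∑ α ∈ S, zstar α)
                - (x₀ - ∑ α ∈ Sᶜ, z α)‖ ^ 2 : ℝ) : EReal)
          ≤ (∑ α ∈ S, h α x)
            + (((1:ℝ)/2 * ‖x - (x₀ - ∑ α ∈ Sᶜ, z α)‖ ^ 2 : ℝ) : EReal))) ∧
    -- converse direction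
    (∀ xstar : H, ∀ ztil : A → H,
      (∀ x : H,
        (∑ α ∈ S, h α xstar)
            + (((1:ℝ)/2 * ‖xstar - (x₀ - ∑ α ∈ Sᶜ, z α)‖ ^ 2 : ℝ) : EReal)
          ≤ (∑ α ∈ S, h α x)
            + (((1:ℝ)/2 * ‖x - (x₀ - ∑ α ∈ Sᶜ, z α)‖ ^ 2 : ℝ) : EReal)) →
      (∀ α ∈ S, InSubdiff (h α) xstar (ztil α)) →
      xstar - x₀ + ∑ α ∈ Sᶜ, z α + ∑ α ∈ S, ztil α = 0 →
      (∀ w : A → H,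
        (((1:ℝ)/2 * ‖x₀ - ∑ α ∈ Sᶜ, z α - ∑ α ∈ S, ztil α‖ ^ 2 : ℝ) : EReal)
            + ∑ α ∈ S, fconj (h α) (ztil α)
          ≤ (((1:ℝ)/2 * ‖x₀ - ∑ α ∈ Sᶜ, z α - ∑ α ∈ S, w α‖ ^ 2 : ℝ) : EReal)
            + ∑ α ∈ S, fconj (h α) (w α))) := by
  classical
  have hbot : ∀ α, ∀ x, h α x ≠ ⊥ := fun α => (hproper α).1
  choose xbar hxbar using fun α => (hproper α).2
  have hfnb : ∀ α (u : H), fconj (h α) u ≠ ⊥ :=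
    fun α u => Aux15.fconj_ne_bot (h α) (hxbar α) (hbot α _) u
  constructor
  · -- forward direction
    intro zstar hmin x
    set y0 : H := x₀ - ∑ α ∈ Sᶜ, z α with hy0
    set xs : H := y0 - ∑ α ∈ S, zstar α with hxs
    choose z0 c0 hz0 using
      fun α => Aux15.exists_minorant (h α) (hbot α) (hxbar α) (hlsc α) (hconv α)
    -- each fconj (h α) (zstar α) is finite for α ∈ S
    have hne_top : ∀ α ∈ S, fconj (h α) (zstar α) ≠ ⊤ := by
      intro β hβ htop
      have hsum : ∑ α ∈ S, fconj (h α) (zstar α) = ⊤ :=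
        Aux15.sum_eq_top β hβ htop (fun α _ => hfnb α (zstar α))
      have h1 := hmin z0
      rw [hsum, EReal.add_top_of_ne_bot (EReal.coe_ne_bot _)] at h1
      have h2 : ∑ α ∈ S, fconj (h α) (z0 α) ≤ ((∑ α ∈ S, c0 α : ℝ) : EReal) := by
        rw [← Aux15.sum_coe]; exact Finset.sum_le_sum fun α _ => hz0 α
      have h3 := h1.trans (add_le_add le_rfl h2)
      rw [← EReal.coe_add] at h3
      exact (EReal.coe_lt_top _).not_ge h3
    set cs : A → ℝ := fun α => (fconj (h α) (zstar α)).toReal with hcsdef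
    have hcs : ∀ α ∈ S, fconj (h α) (zstar α) = ((cs α : ℝ) : EReal) :=
      fun α hα => (EReal.coe_toReal (hne_top α hα) (hfnb α (zstar α))).symm
    -- block optimality
    have hblock : ∀ α ∈ S, ∀ u : H,
        (((1:ℝ)/2 * ‖xs‖ ^ 2 + cs α : ℝ) : EReal)
          ≤ (((1:ℝ)/2 * ‖xs + zstar α - u‖ ^ 2 : ℝ) : EReal) + fconj (h α) u := by
      intro α hα u
      set R : ℝ := ∑ β ∈ S.erase α, cs β with hR
      have hsumz : ∑ β ∈ S, zstar β = zstar α + ∑ β ∈ S.erase α, zstar β :=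
        (Finset.add_sum_erase _ _ hα).symm
      have hsumw : ∑ β ∈ S, Function.update zstar α u β
          = u + ∑ β ∈ S.erase α, zstar β := by
        rw [← Finset.add_sum_erase _ _ hα, Function.update_self]
        congr 1
        exact Finset.sum_congr rfl fun β hβ =>
          Function.update_of_ne (Finset.ne_of_mem_erase hβ) _ _
      have hfw : ∑ β ∈ S, fconj (h β) (Function.update zstar α u β)
          = fconj (h α) u + ∑ β ∈ S.erase α, fconj (h β) (zstar β) := by
        rw [← Finset.add_sum_erase _ _ hα, Function.update_self]
        congr 1
        exact Finset.sum_congr rfl fun β hβ => by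
          rw [Function.update_of_ne (Finset.ne_of_mem_erase hβ)]
      have herase : ∑ β ∈ S.erase α, fconj (h β) (zstar β) = ((R : ℝ) : EReal) := by
        rw [hR, ← Aux15.sum_coe]
        exact Finset.sum_congr rfl fun β hβ => hcs β (Finset.mem_of_mem_erase hβ)
      have hfz : ∑ β ∈ S, fconj (h β) (zstar β)
          = ((cs α : ℝ) : EReal) + ((R : ℝ) : EReal) := by
        rw [← Finset.add_sum_erase _ _ hα, hcs α hα, herase]
      have h1 := hmin (Function.update zstar α u)
      rw [hsumw, hfw, herase, hfz] at h1
      have e1 : y0 - (u + ∑ β ∈ S.erase α, zstar β) = xs + zstar α - u := by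
        rw [hxs, hsumz]; abel
      rw [e1] at h1
      simp only [← add_assoc] at h1
      have h2 := (EReal.addLECancellable_coe R).add_le_add_iff_right.1 h1
      rw [EReal.coe_add]
      exact h2
    -- subgradient bound via limit
    have hM : ∀ α ∈ S, ∀ u : H,
        ((inner ℝ xs u : ℝ) : EReal) - fconj (h α) u
          ≤ (((inner ℝ xs (zstar α) : ℝ) - cs α : ℝ) : EReal) := by
      intro α hα u
      rcases eq_or_ne (fconj (h α) u) ⊤ with hu | hu
      · rw [hu, EReal.sub_top]; exact bot_le
      · have hdu : fconj (h α) u = ((fconj (h α) u).toReal : EReal) :=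
          (EReal.coe_toReal hu (hfnb α u)).symm
        set du := (fconj (h α) u).toReal
        rw [hdu, ← EReal.coe_sub, EReal.coe_le_coe_iff]
        have hkey : ∀ t : ℝ, 0 < t → t ≤ 1 →
            cs α + (inner ℝ xs (u - zstar α) : ℝ) - du ≤ t / 2 * ‖u - zstar α‖ ^ 2 := by
          intro t ht0 ht1
          have hcomb := Aux15.fconj_combo (h α) (hbot α) (le_of_lt ht0) ht1
            (le_of_eq (hcs α hα)) (le_of_eq hdu)
          have hb := hblock α hα ((1 - t) • zstar α + t • u)
          have e2 : xs + zstar α - ((1 - t) • zstar α + t • u)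
              = xs - t • (u - zstar α) := by
            rw [sub_smul, one_smul, smul_sub]; abel
          rw [e2] at hb
          have hb2 := hb.trans (add_le_add le_rfl hcomb)
          rw [← EReal.coe_add, EReal.coe_le_coe_iff] at hb2
          have e3 : ‖xs - t • (u - zstar α)‖ ^ 2
              = ‖xs‖ ^ 2 - 2 * (t * (inner ℝ xs (u - zstar α) : ℝ))
                + t ^ 2 * ‖u - zstar α‖ ^ 2 := by
            rw [norm_sub_sq_real, real_inner_smul_right, norm_smul, Real.norm_eq_abs,
              mul_pow, sq_abs]
          rw [e3] at hb2
          have h9 : t * (cs α + (inner ℝ xs (u - zstar α) : ℝ) - du)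
              ≤ t * (t / 2 * ‖u - zstar α‖ ^ 2) := by nlinarith
          exact le_of_mul_le_mul_left h9 ht0
        have hI : (inner ℝ xs (u - zstar α) : ℝ)
            = (inner ℝ xs u : ℝ) - (inner ℝ xs (zstar α) : ℝ) := inner_sub_right _ _ _
        by_contra hcon
        push_neg at hcon
        set δ := cs α + (inner ℝ xs (u - zstar α) : ℝ) - du with hδ
        have hδ0 : 0 < δ := by rw [hδ, hI]; linarith
        set N := ‖u - zstar α‖ ^ 2 with hN
        have hN0 : 0 ≤ N := sq_nonneg _
        set t := min 1 (δ / (N + 1)) with ht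
        have ht0 : 0 < t := lt_min one_pos (div_pos hδ0 (by linarith))
        have ht1 : t ≤ 1 := min_le_left _ _
        have h10 := hkey t ht0 ht1
        have h11 : t ≤ δ / (N + 1) := min_le_right _ _
        have h12 : δ / (N + 1) * (N + 1) = δ := div_mul_cancel₀ _ (by linarith)
        have h13 : t * N ≤ δ / (N + 1) * N := mul_le_mul_of_nonneg_right h11 hN0
        have h14 : 0 < δ / (N + 1) := div_pos hδ0 (by linarith)
        nlinarith
    -- Fenchel-Moreau gives subgradient property at xs
    have hsub2 : ∀ α ∈ S, h α xs ≤ (((inner ℝ xs (zstar α) : ℝ) - cs α : ℝ) : EReal) :=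
      fun α hα => Aux15.fm_bound (h α) (hbot α) (hxbar α) (hlsc α) (hconv α) xs _ (hM α hα)
    have hge : ∀ α ∈ S, (((inner ℝ (zstar α) xs : ℝ) - cs α : ℝ) : EReal) ≤ h α xs :=
      fun α hα => Aux15.sub_le_real (hbot α xs)
        ((Aux15.le_fconj (h α) (zstar α) xs).trans (hcs α hα).le)
    have heq : ∀ α ∈ S, h α xs = (((inner ℝ (zstar α) xs : ℝ) - cs α : ℝ) : EReal) := by
      intro α hα
      refine le_antisymm ?_ (hge α hα)
      have h5 := hsub2 α hα
      rwa [real_inner_comm (zstar α) xs] at h5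
    have hsg : ∀ α ∈ S, ∀ y : H, (((inner ℝ (zstar α) y : ℝ) - cs α : ℝ) : EReal) ≤ h α y :=
      fun α hα y => Aux15.sub_le_real (hbot α y)
        ((Aux15.le_fconj (h α) (zstar α) y).trans (hcs α hα).le)
    -- final assembly
    have hsl : ∑ α ∈ S, h α xs
        = ((∑ α ∈ S, ((inner ℝ (zstar α) xs : ℝ) - cs α) : ℝ) : EReal) := by
      rw [← Aux15.sum_coe]; exact Finset.sum_congr rfl heq
    have hsr : ((∑ α ∈ S, ((inner ℝ (zstar α) x : ℝ) - cs α) : ℝ) : EReal)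
        ≤ ∑ α ∈ S, h α x := by
      rw [← Aux15.sum_coe]; exact Finset.sum_le_sum fun α hα => hsg α hα x
    rw [hsl]
    refine le_trans ?_ (add_le_add hsr le_rfl)
    rw [← EReal.coe_add, ← EReal.coe_add, EReal.coe_le_coe_iff]
    have hsz : ∑ α ∈ S, zstar α = y0 - xs := by rw [hxs]; abel
    have hK : (inner ℝ (y0 - xs) (x - xs) : ℝ)
        = (∑ α ∈ S, ((inner ℝ (zstar α) x : ℝ) - cs α))
          - (∑ α ∈ S, ((inner ℝ (zstar α) xs : ℝ) - cs α)) := by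
      rw [← hsz, sum_inner, ← Finset.sum_sub_distrib]
      exact Finset.sum_congr rfl fun α _ => by rw [inner_sub_right]; ring
    have hnorm : ‖x - y0‖ ^ 2
        = ‖x - xs‖ ^ 2 + 2 * (inner ℝ (x - xs) (xs - y0) : ℝ) + ‖xs - y0‖ ^ 2 := by
      have e4 : x - y0 = (x - xs) + (xs - y0) := by abel
      rw [e4, norm_add_sq_real]
    have hio : (inner ℝ (y0 - xs) (x - xs) : ℝ) = -(inner ℝ (x - xs) (xs - y0) : ℝ) := by
      rw [real_inner_comm]
      rw [show y0 - xs = -(xs - y0) from by abel, inner_neg_right]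
    nlinarith [sq_nonneg ‖x - xs‖]
  · -- converse direction
    intro xstar ztil hPmin hsub hzero w
    set y0 : H := x₀ - ∑ α ∈ Sᶜ, z α with hy0
    have hsz : ∑ α ∈ S, ztil α = y0 - xstar := by
      have h1 : (∑ α ∈ S, ztil α) - (y0 - xstar)
          = xstar - x₀ + ∑ α ∈ Sᶜ, z α + ∑ α ∈ S, ztil α := by
        rw [hy0]; abel
      rw [hzero] at h1
      exact sub_eq_zero.1 h1
    have hpx : ∀ α ∈ S, h α xstar ≠ ⊤ := by
      intro α hα htop
      have h1 := hsub α hα (xbar α)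
      rw [htop, EReal.top_add_of_ne_bot (EReal.coe_ne_bot _)] at h1
      exact hxbar α (top_le_iff.1 h1)
    set p : A → ℝ := fun α => (h α xstar).toReal with hp
    have hpeq : ∀ α ∈ S, h α xstar = ((p α : ℝ) : EReal) :=
      fun α hα => (EReal.coe_toReal (hpx α hα) (hbot α xstar)).symm
    have hfc : ∀ α ∈ S, fconj (h α) (ztil α)
        = (((inner ℝ (ztil α) xstar : ℝ) - p α : ℝ) : EReal) := by
      intro α hα
      refine le_antisymm (iSup_le fun y => ?_) ?_
      · rcases eq_or_ne (h α y) ⊤ with hy | hy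
        · rw [hy, EReal.sub_top]; exact bot_le
        · have hm : h α y = ((h α y).toReal : EReal) := (EReal.coe_toReal hy (hbot α y)).symm
          have h2 := hsub α hα y
          rw [hpeq α hα, hm, ← EReal.coe_add, EReal.coe_le_coe_iff] at h2
          rw [hm, ← EReal.coe_sub, EReal.coe_le_coe_iff]
          have h3 : (inner ℝ (ztil α) (y - xstar) : ℝ)
              = (inner ℝ (ztil α) y : ℝ) - (inner ℝ (ztil α) xstar : ℝ) := inner_sub_right _ _ _
          rw [h3] at h2
          linarith
      · have h4 := Aux15.le_fconj (h α) (ztil α) xstar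
        rw [hpeq α hα, ← EReal.coe_sub] at h4
        exact h4
    have hL : ∑ α ∈ S, fconj (h α) (ztil α)
        = ((∑ α ∈ S, ((inner ℝ (ztil α) xstar : ℝ) - p α) : ℝ) : EReal) := by
      rw [← Aux15.sum_coe]; exact Finset.sum_congr rfl hfc
    have hR : ((∑ α ∈ S, ((inner ℝ (w α) xstar : ℝ) - p α) : ℝ) : EReal)
        ≤ ∑ α ∈ S, fconj (h α) (w α) := by
      rw [← Aux15.sum_coe]
      refine Finset.sum_le_sum fun α hα => ?_
      have h4 := Aux15.le_fconj (h α) (w α) xstar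
      rw [hpeq α hα, ← EReal.coe_sub] at h4
      exact h4
    have hnx : y0 - ∑ α ∈ S, ztil α = xstar := by rw [hsz]; abel
    rw [hL, hnx]
    refine le_trans ?_ (add_le_add le_rfl hR)
    rw [← EReal.coe_add, ← EReal.coe_add, EReal.coe_le_coe_iff]
    set sw : H := ∑ α ∈ S, w α with hsw
    have hsum1 : ∑ α ∈ S, ((inner ℝ (ztil α) xstar : ℝ) - p α)
        = (inner ℝ (y0 - xstar) xstar : ℝ) - ∑ α ∈ S, p α := by
      rw [Finset.sum_sub_distrib, ← sum_inner, hsz]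
    have hsum2 : ∑ α ∈ S, ((inner ℝ (w α) xstar : ℝ) - p α)
        = (inner ℝ sw xstar : ℝ) - ∑ α ∈ S, p α := by
      rw [Finset.sum_sub_distrib, ← sum_inner, hsw]
    rw [hsum1, hsum2]
    have e5 : y0 - sw = xstar - (sw - (y0 - xstar)) := by abel
    rw [e5, norm_sub_sq_real]
    have e6 : (inner ℝ sw xstar : ℝ)
        = (inner ℝ (sw - (y0 - xstar)) xstar : ℝ) + (inner ℝ (y0 - xstar) xstar : ℝ) := by
      rw [← inner_add_left]; congr 1; abel
    have e7 : (inner ℝ xstar (sw - (y0 - xstar)) : ℝ)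
        = (inner ℝ (sw - (y0 - xstar)) xstar : ℝ) := real_inner_comm _ _
    nlinarith [sq_nonneg ‖sw - (y0 - xstar)‖]
end
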